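/- arXiv:0905.3872 — 4 statements merged into one kernel-verified Lean document; each statement's English description precedes it below -/
import Mathlib

section
/- A matrix g ∈ GL(2,ℤ) satisfies g₁₁+g₂₁ = 1 and g₁₂+g₂₂ = 1 (i.e. g ∈ G_μ) if and only if there exists n ∈ ℤ with g = gₙ or g = fₙ. In other words, G_μ = G⁺_μ ⊔ G⁻_μ, where G⁺_μ := {gₙ : n ∈ ℤ} and G⁻_μ := {fₙ : n ∈ ℤ}, and these two families are disjoint. -/
open Matrix

/-- The matrix `gₙ = [[1−n, −n],[n, 1+n]]`. -/
def gmat (n : ℤ) : Matrix (Fin 2) (Fin 2) ℤ := !![1 - n, -n; n, 1 + n]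

/-- The matrix `fₙ = [[1−n, 2−n],[n, −1+n]]`. -/
def fmat (n : ℤ) : Matrix (Fin 2) (Fin 2) ℤ := !![1 - n, 2 - n; n, n - 1]

/-- `gₙ` as an element of `GL(2,ℤ)` (its inverse is `g₋ₙ`). -/
def gU (n : ℤ) : Matrix.GeneralLinearGroup (Fin 2) ℤ :=
  ⟨gmat n, gmat (-n),
    by ext i j; fin_cases i <;> fin_cases j <;>
      simp [gmat, Matrix.mul_apply, Fin.sum_univ_two, Matrix.one_apply] <;> ring,
    by ext i j; fin_cases i <;> fin_cases j <;>
      simp [gmat, Matrix.mul_apply, Fin.sum_univ_two, Matrix.one_apply] <;> ring⟩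

/-- `fₙ` as an element of `GL(2,ℤ)` (it is its own inverse). -/
def fU (n : ℤ) : Matrix.GeneralLinearGroup (Fin 2) ℤ :=
  ⟨fmat n, fmat n,
    by ext i j; fin_cases i <;> fin_cases j <;>
      simp [fmat, Matrix.mul_apply, Fin.sum_univ_two, Matrix.one_apply] <;> ring,
    by ext i j; fin_cases i <;> fin_cases j <;>
      simp [fmat, Matrix.mul_apply, Fin.sum_univ_two, Matrix.one_apply] <;> ring⟩

/-- Membership in `G_μ`: both column sums of `g` equal `1`. -/
def memGmu (g : Matrix.GeneralLinearGroup (Fin 2) ℤ) : Prop :=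
  (↑g : Matrix (Fin 2) (Fin 2) ℤ) 0 0 + (↑g : Matrix (Fin 2) (Fin 2) ℤ) 1 0 = 1 ∧
  (↑g : Matrix (Fin 2) (Fin 2) ℤ) 0 1 + (↑g : Matrix (Fin 2) (Fin 2) ℤ) 1 1 = 1

/-- `g ∈ G_μ` iff `g = gₙ` or `g = fₙ` for some `n ∈ ℤ`,
i.e. `G_μ = G⁺_μ ⊔ G⁻_μ`, and the two families are disjoint. -/
theorem Gmu_eq_union_disjoint :
    (∀ g : Matrix.GeneralLinearGroup (Fin 2) ℤ,
      memGmu g ↔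
        ((∃ n : ℤ, (↑g : Matrix (Fin 2) (Fin 2) ℤ) = gmat n) ∨
         (∃ n : ℤ, (↑g : Matrix (Fin 2) (Fin 2) ℤ) = fmat n))) ∧
    (∀ n m : ℤ, gmat n ≠ fmat m) := by
  constructor
  · intro g
    constructor
    · rintro ⟨h1, h2⟩
      have hdet : IsUnit ((↑g : Matrix (Fin 2) (Fin 2) ℤ).det) :=
        (Matrix.isUnit_iff_isUnit_det _).mp g.isUnit
      rw [Matrix.det_fin_two] at hdet
      have ha : (↑g : Matrix (Fin 2) (Fin 2) ℤ) 0 0 = 1 - (↑g : Matrix (Fin 2) (Fin 2) ℤ) 1 0 := by omega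
      have hb : (↑g : Matrix (Fin 2) (Fin 2) ℤ) 0 1 = 1 - (↑g : Matrix (Fin 2) (Fin 2) ℤ) 1 1 := by omega
      rw [ha, hb, Int.isUnit_iff] at hdet
      rcases hdet with h | h <;>
        [(have h' : (↑g : Matrix (Fin 2) (Fin 2) ℤ) 1 1 - (↑g : Matrix (Fin 2) (Fin 2) ℤ) 1 0 = 1 := by linear_combination h);
         (have h' : (↑g : Matrix (Fin 2) (Fin 2) ℤ) 1 1 - (↑g : Matrix (Fin 2) (Fin 2) ℤ) 1 0 = -1 := by linear_combination h)]
      · left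
        refine ⟨(↑g : Matrix (Fin 2) (Fin 2) ℤ) 1 0, ?_⟩
        ext i j
        fin_cases i <;> fin_cases j <;> simp [gmat] <;> omega
      · right
        refine ⟨(↑g : Matrix (Fin 2) (Fin 2) ℤ) 1 0, ?_⟩
        ext i j
        fin_cases i <;> fin_cases j <;> simp [fmat] <;> omega
    · rintro (⟨n, hn⟩ | ⟨n, hn⟩) <;> rw [memGmu, hn] <;> simp [gmat, fmat]
  · intro n m h
    have h00 := congrFun (congrFun h 0) 0
    have h01 := congrFun (congrFun h 0) 1
    simp [gmat, fmat] at h00 h01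
    omega
end

section
/- The map ℤ → GL(2,ℤ) sending n to gₙ is an injective group homomorphism — in particular gₙ·gₘ = g_{n+m} and gₙ = (g₁)ⁿ for all n, m ∈ ℤ — and its image is exactly the set of elements of G_μ of determinant 1. Hence G⁺_μ := {g ∈ G_μ : det g = 1} is an infinite cyclic group generated by g₁ = [[0,−1],[1,2]]. -/
open Matrix

lemma gU_coe (n : ℤ) : (↑(gU n) : Matrix (Fin 2) (Fin 2) ℤ) = gmat n := rfl

lemma gU_mul (n m : ℤ) : gU n * gU m = gU (n + m) := by
  ext i j
  fin_cases i <;> fin_cases j <;>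
    simp [gU, gmat, Matrix.mul_apply, Fin.sum_univ_two] <;> ring

/-- `n ↦ gₙ` is an injective group homomorphism `ℤ → GL(2,ℤ)`
(in particular `gₙ·gₘ = g_{n+m}` and `gₙ = (g₁)ⁿ`), whose image is exactly the set
of elements of `G_μ` of determinant `1`.  Hence `G⁺_μ` is infinite cyclic, generated
by `g₁ = [[0,−1],[1,2]]`. -/
theorem gU_injective_hom_range :
    (∀ n m : ℤ, gU n * gU m = gU (n + m)) ∧
    (∀ n : ℤ, gU n = (gU 1) ^ n) ∧
    Function.Injective gU ∧
    gmat 1 = !![0, -1; 1, 2] ∧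
    (∀ g : Matrix.GeneralLinearGroup (Fin 2) ℤ,
      (∃ n : ℤ, gU n = g) ↔
        (memGmu g ∧ (↑g : Matrix (Fin 2) (Fin 2) ℤ).det = 1)) := by
  have h0 : gU 0 = 1 := by
    ext i j
    fin_cases i <;> fin_cases j <;> simp [gU, gmat, Matrix.one_apply]
  refine ⟨gU_mul, ?_, ?_, ?_, ?_⟩
  · intro n
    induction n using Int.induction_on with
    | zero => simpa using h0
    | succ k ih => rw [← gU_mul k 1, ih, _root_.zpow_add, zpow_one]
    | pred k ih =>
      have : gU (-k - 1) * gU 1 = gU (-k) := by rw [gU_mul]; ring_nf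
      rw [← mul_inv_eq_iff_eq_mul.mpr this.symm, ih]
      group
  · intro n m h
    have := congrArg (fun g : Matrix.GeneralLinearGroup (Fin 2) ℤ => (↑g : Matrix (Fin 2) (Fin 2) ℤ) 1 0) h
    simpa [gU, gmat] using this
  · rfl
  · intro g
    constructor
    · rintro ⟨n, rfl⟩
      refine ⟨⟨?_, ?_⟩, ?_⟩ <;> simp [gU_coe, gmat, memGmu, Matrix.det_fin_two] <;> ring
    · rintro ⟨⟨h1, h2⟩, hd⟩
      refine ⟨(↑g : Matrix (Fin 2) (Fin 2) ℤ) 1 0, ?_⟩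
      set M := (↑g : Matrix (Fin 2) (Fin 2) ℤ) with hM
      have hdet : M 0 0 * M 1 1 - M 0 1 * M 1 0 = 1 := by
        rw [← hd, Matrix.det_fin_two]
      have e00 : M 0 0 = 1 - M 1 0 := by linarith
      have e11 : M 1 1 = 1 + M 1 0 := by
        linear_combination hdet + (M 1 0) * h2 - (M 1 1) * h1
      have e01 : M 0 1 = -(M 1 0) := by linarith
      ext i j
      fin_cases i <;> fin_cases j <;>
        simp [gU_coe, gmat, ← hM, e00, e01, e11]
end

section
/- G_μ is isomorphic to the infinite dihedral group D_∞: the group homomorphism from the free product (ℤ/2ℤ) * (ℤ/2ℤ) to GL(2,ℤ) sending the generator of the first factor to f₀ = [[1,2],[0,−1]] and the generator of the second factor to f₁ = [[0,1],[1,0]] is injective, and its image is exactly G_μ. Equivalently, G_μ (as a group) is isomorphic to the infinite dihedral group (DihedralGroup 0). -/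
open Matrix

namespace GmuAux

abbrev GL2 := Matrix.GeneralLinearGroup (Fin 2) ℤ

lemma gU_mul_gU (m n : ℤ) : gU m * gU n = gU (m + n) := by
  refine Units.ext ?_
  show gmat m * gmat n = gmat (m + n)
  ext i j; fin_cases i <;> fin_cases j <;>
    simp [gmat, Matrix.mul_apply, Fin.sum_univ_two] <;> ring

lemma gU_mul_fU (m n : ℤ) : gU m * fU n = fU (m + n) := by
  refine Units.ext ?_
  show gmat m * fmat n = fmat (m + n)
  ext i j; fin_cases i <;> fin_cases j <;>
    simp [gmat, fmat, Matrix.mul_apply, Fin.sum_univ_two] <;> ring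

lemma fU_mul_gU (m n : ℤ) : fU m * gU n = fU (m - n) := by
  refine Units.ext ?_
  show fmat m * gmat n = fmat (m - n)
  ext i j; fin_cases i <;> fin_cases j <;>
    simp [gmat, fmat, Matrix.mul_apply, Fin.sum_univ_two] <;> ring

lemma fU_mul_fU (m n : ℤ) : fU m * fU n = gU (m - n) := by
  refine Units.ext ?_
  show fmat m * fmat n = gmat (m - n)
  ext i j; fin_cases i <;> fin_cases j <;>
    simp [gmat, fmat, Matrix.mul_apply, Fin.sum_univ_two] <;> ring

lemma gU_zero : gU 0 = 1 := by
  refine Units.ext ?_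
  show gmat 0 = 1
  ext i j; fin_cases i <;> fin_cases j <;> simp [gmat, Matrix.one_apply]

/-- `n ↦ gU n` as a monoid hom from `Multiplicative ℤ`. -/
def gH : Multiplicative ℤ →* GL2 where
  toFun m := gU (Multiplicative.toAdd m)
  map_one' := gU_zero
  map_mul' x y := by simp [gU_mul_gU]

lemma gU_zpow (n k : ℤ) : gU n ^ k = gU (k * n) := by
  have h1 : gU n = gH (Multiplicative.ofAdd n) := rfl
  rw [h1, ← map_zpow]
  show gU (Multiplicative.toAdd (Multiplicative.ofAdd n ^ k)) = _
  rw [toAdd_zpow]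
  simp [smul_eq_mul]

lemma gU_injective : Function.Injective gU := by
  intro m n h
  have : (↑(gU m) : Matrix (Fin 2) (Fin 2) ℤ) 1 0 = (↑(gU n) : Matrix (Fin 2) (Fin 2) ℤ) 1 0 := by
    rw [h]
  simpa [gU, gmat] using this

lemma gU_ne_one {n : ℤ} (h : n ≠ 0) : gU n ≠ 1 := by
  intro hc
  exact h (gU_injective (by rw [hc, gU_zero]))

lemma fU_ne_one (n : ℤ) : fU n ≠ 1 := by
  intro hc
  have h2 : (↑(fU n) : Matrix (Fin 2) (Fin 2) ℤ) 1 0 = (↑(1 : GL2) : Matrix (Fin 2) (Fin 2) ℤ) 1 0 := by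
    rw [hc]
  have h3 : (↑(fU n) : Matrix (Fin 2) (Fin 2) ℤ) 0 1 = (↑(1 : GL2) : Matrix (Fin 2) (Fin 2) ℤ) 0 1 := by
    rw [hc]
  simp [fU, fmat, Matrix.one_apply] at h2 h3
  omega


abbrev z (i : ZMod 0) : ℤ := i

lemma z_add (i j : ZMod 0) : z (i + j) = z i + z j := rfl
lemma z_sub (i j : ZMod 0) : z (i - j) = z i - z j := rfl
lemma z_zero : z 0 = 0 := rfl

/-- Hom from `Multiplicative (ZMod 2)` determined by an element of order dividing 2. -/
def C2hom (A : GL2) (h : A * A = 1) : Multiplicative (ZMod 2) →* GL2 where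
  toFun m := A ^ (Multiplicative.toAdd m).val
  map_one' := by simp
  map_mul' x y := by
    have h2 : A ^ 2 = 1 := by rw [pow_two]; exact h
    have key : ∀ k : ℕ, A ^ (k % 2) = A ^ k := by
      intro k
      conv_rhs => rw [← Nat.div_add_mod k 2]
      rw [pow_add, pow_mul, h2, one_pow, one_mul]
    show A ^ ((Multiplicative.toAdd (x * y)).val) = _
    rw [toAdd_mul, ZMod.val_add, key, pow_add]

lemma fU_sq (n : ℤ) : fU n * fU n = 1 := by rw [fU_mul_fU, sub_self, gU_zero]

abbrev K := Monoid.Coprod (Multiplicative (ZMod 2)) (Multiplicative (ZMod 2))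

/-- The lifted hom sending the generators to `fU 0` and `fU 1`. -/
def phi : K →* GL2 := Monoid.Coprod.lift (C2hom (fU 0) (fU_sq 0)) (C2hom (fU 1) (fU_sq 1))

def a : K := Monoid.Coprod.inl (Multiplicative.ofAdd (1 : ZMod 2))
def b : K := Monoid.Coprod.inr (Multiplicative.ofAdd (1 : ZMod 2))
def x : K := a * b

lemma phi_a : phi a = fU 0 := by
  show (C2hom (fU 0) (fU_sq 0)) (Multiplicative.ofAdd (1 : ZMod 2)) = fU 0
  show fU 0 ^ (Multiplicative.toAdd (Multiplicative.ofAdd (1 : ZMod 2))).val = fU 0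
  norm_num [ZMod.val_one]

lemma phi_b : phi b = fU 1 := by
  show (C2hom (fU 1) (fU_sq 1)) (Multiplicative.ofAdd (1 : ZMod 2)) = fU 1
  show fU 1 ^ (Multiplicative.toAdd (Multiplicative.ofAdd (1 : ZMod 2))).val = fU 1
  norm_num [ZMod.val_one]

lemma a_mul_a : a * a = 1 := by
  show Monoid.Coprod.inl _ * Monoid.Coprod.inl _ = 1
  rw [← _root_.map_mul]
  have h : (Multiplicative.ofAdd (1 : ZMod 2)) * (Multiplicative.ofAdd (1 : ZMod 2)) = 1 := by
    decide
  rw [h, _root_.map_one]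

lemma b_mul_b : b * b = 1 := by
  show Monoid.Coprod.inr _ * Monoid.Coprod.inr _ = 1
  rw [← _root_.map_mul]
  have h : (Multiplicative.ofAdd (1 : ZMod 2)) * (Multiplicative.ofAdd (1 : ZMod 2)) = 1 := by
    decide
  rw [h, _root_.map_one]

lemma a_inv : a⁻¹ = a := by rw [inv_eq_iff_mul_eq_one, a_mul_a]
lemma b_inv : b⁻¹ = b := by rw [inv_eq_iff_mul_eq_one, b_mul_b]

lemma conj_x (k : ℤ) : a * x ^ k * a = x ^ (-k) := by
  have h1 : a * x * a⁻¹ = x⁻¹ := by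
    rw [a_inv]
    show a * (a * b) * a = (a * b)⁻¹
    rw [_root_.mul_inv_rev, a_inv, b_inv, ← mul_assoc, a_mul_a, one_mul]
  calc a * x ^ k * a = a * x ^ k * a⁻¹ := by rw [a_inv]
    _ = (MulAut.conj a) (x ^ k) := by simp [MulAut.conj_apply]
    _ = ((MulAut.conj a) x) ^ k := _root_.map_zpow _ _ _
    _ = (x⁻¹) ^ k := by rw [MulAut.conj_apply, h1]
    _ = x ^ (-k) := by rw [_root_.inv_zpow, ← _root_.zpow_neg]

lemma x_pow_comm_a (k : ℤ) : x ^ k * a = a * x ^ (-k) := by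
  calc x ^ k * a = (a * a) * (x ^ k * a) := by rw [a_mul_a, one_mul]
    _ = a * (a * x ^ k * a) := by group
    _ = a * x ^ (-k) := by rw [conj_x]

/-- The hom `D_∞ →* K`. -/
def rho : DihedralGroup 0 →* K where
  toFun u := match u with
    | .r i => x ^ (-(z i))
    | .sr i => a * x ^ (-(z i))
  map_one' := by
    show x ^ (-(z (0 : ZMod 0))) = 1
    rw [z_zero, neg_zero, zpow_zero]
  map_mul' u v := by
    rcases u with i | i <;> rcases v with j | j
    · show x ^ (-(z (i + j))) = x ^ (-(z i)) * x ^ (-(z j))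
      rw [z_add, neg_add, _root_.zpow_add]
    · show a * x ^ (-(z (j - i))) = x ^ (-(z i)) * (a * x ^ (-(z j)))
      rw [z_sub, neg_sub]
      have e1 : x ^ (-(z i)) * a = a * x ^ (z i) := by rw [x_pow_comm_a, neg_neg]
      have : x ^ (-(z i)) * (a * x ^ (-(z j))) = a * x ^ (z i - z j) := by
        calc x ^ (-(z i)) * (a * x ^ (-(z j)))
            = (x ^ (-(z i)) * a) * x ^ (-(z j)) := by rw [mul_assoc]
          _ = (a * x ^ (z i)) * x ^ (-(z j)) := by rw [e1]
          _ = a * x ^ (z i - z j) := by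
              rw [mul_assoc, ← _root_.zpow_add, sub_eq_add_neg]
      rw [this]
    · show a * x ^ (-(z (i + j))) = a * x ^ (-(z i)) * x ^ (-(z j))
      rw [z_add, neg_add, _root_.zpow_add, mul_assoc]
    · show x ^ (-(z (j - i))) = a * x ^ (-(z i)) * (a * x ^ (-(z j)))
      rw [z_sub, neg_sub]
      have e1 : x ^ (-(z i)) * a = a * x ^ (z i) := by rw [x_pow_comm_a, neg_neg]
      have : a * x ^ (-(z i)) * (a * x ^ (-(z j))) = x ^ (z i - z j) := by
        calc a * x ^ (-(z i)) * (a * x ^ (-(z j)))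
            = a * ((x ^ (-(z i)) * a) * x ^ (-(z j))) := by group
          _ = a * ((a * x ^ (z i)) * x ^ (-(z j))) := by rw [e1]
          _ = (a * a) * (x ^ (z i) * x ^ (-(z j))) := by group
          _ = x ^ (z i - z j) := by
              rw [a_mul_a, one_mul, ← _root_.zpow_add, sub_eq_add_neg]
      rw [this]

lemma rho_r (i : ZMod 0) : rho (DihedralGroup.r i) = x ^ (-(z i)) := rfl
lemma rho_sr (i : ZMod 0) : rho (DihedralGroup.sr i) = a * x ^ (-(z i)) := rfl

/-- The hom `D_∞ →* GL2`. -/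
def psi : DihedralGroup 0 →* GL2 := phi.comp rho

lemma phi_x : phi x = gU (-1) := by
  show phi (a * b) = _
  rw [_root_.map_mul, phi_a, phi_b, fU_mul_fU]
  norm_num

lemma psi_r (i : ZMod 0) : psi (DihedralGroup.r i) = gU (z i) := by
  show phi (rho (DihedralGroup.r i)) = _
  rw [rho_r, _root_.map_zpow, phi_x, gU_zpow]
  congr 1; ring

lemma psi_sr (i : ZMod 0) : psi (DihedralGroup.sr i) = fU (-(z i)) := by
  show phi (rho (DihedralGroup.sr i)) = _
  rw [rho_sr, _root_.map_mul, _root_.map_zpow, phi_x, phi_a, gU_zpow, fU_mul_gU]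
  congr 1; ring


lemma psi_injective : Function.Injective psi := by
  rw [injective_iff_map_eq_one]
  intro u hu
  rcases u with i | i
  · rw [psi_r] at hu
    have h0 : z i = 0 := gU_injective (by rw [hu, gU_zero])
    have hi : i = 0 := h0
    rw [hi]; rfl
  · rw [psi_sr] at hu
    exact absurd hu (fU_ne_one _)

lemma psi_range (g : GL2) : g ∈ psi.range ↔ memGmu g := by
  constructor
  · rintro ⟨u, rfl⟩
    rcases u with i | i
    · rw [psi_r]
      refine ⟨?_, ?_⟩ <;> · show gmat (z i) _ _ + gmat (z i) _ _ = 1; simp [gmat]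
    · rw [psi_sr]
      refine ⟨?_, ?_⟩ <;> · show fmat (-z i) _ _ + fmat (-z i) _ _ = 1; simp [fmat] <;> ring
  · rintro ⟨h1, h2⟩
    set A := (↑g : Matrix (Fin 2) (Fin 2) ℤ) with hA
    have hdet : IsUnit A.det := (Matrix.isUnit_iff_isUnit_det A).mp g.isUnit
    rw [Matrix.det_fin_two, Int.isUnit_iff] at hdet
    have e11 : A 1 1 = 1 - A 0 1 := by omega
    have e10 : A 1 0 = 1 - A 0 0 := by omega
    rw [e11, e10] at hdet
    rcases hdet with hd | hd
    · have hd' : A 0 0 - A 0 1 = 1 := by linear_combination hd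
      refine ⟨DihedralGroup.r ((1 - A 0 0 : ℤ) : ZMod 0), ?_⟩
      refine (psi_r _).trans ?_
      refine Units.ext ?_
      show gmat _ = A
      ext i j
      fin_cases i <;> fin_cases j <;> simp [gmat, z] <;> omega
    · have hd' : A 0 0 - A 0 1 = -1 := by linear_combination hd
      refine ⟨DihedralGroup.sr ((A 0 0 - 1 : ℤ) : ZMod 0), ?_⟩
      refine (psi_sr _).trans ?_
      refine Units.ext ?_
      show fmat _ = A
      ext i j
      fin_cases i <;> fin_cases j <;> simp [fmat, z] <;> omega

lemma rho_surjective : Function.Surjective rho := by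
  have hcases : ∀ m' : Multiplicative (ZMod 2),
      m' = 1 ∨ m' = Multiplicative.ofAdd (1 : ZMod 2) := by decide
  intro v
  show v ∈ rho.range
  induction v using Monoid.Coprod.induction_on with
  | inl m =>
      rcases hcases m with rfl | rfl
      · exact ⟨1, by rw [_root_.map_one, _root_.map_one]⟩
      · refine ⟨DihedralGroup.sr 0, ?_⟩
        rw [rho_sr, z_zero, neg_zero, zpow_zero, mul_one]
        rfl
  | inr m =>
      rcases hcases m with rfl | rfl
      · exact ⟨1, by rw [_root_.map_one, _root_.map_one]⟩
      · refine ⟨DihedralGroup.sr ((-1 : ℤ) : ZMod 0), ?_⟩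
        refine (rho_sr _).trans ?_
        show a * x ^ (-(z ((-1 : ℤ) : ZMod 0))) = b
        have hz : -(z ((-1 : ℤ) : ZMod 0)) = 1 := by norm_num [z]
        rw [hz, zpow_one]
        show a * (a * b) = b
        rw [← mul_assoc, a_mul_a, one_mul]
  | mul u w hu hw => exact mul_mem hu hw

end GmuAux

/-- `G_μ ≅ D_∞`.  The homomorphism from the free product
`(ℤ/2ℤ) * (ℤ/2ℤ)` to `GL(2,ℤ)` sending the generator of the first factor to
`f₀ = [[1,2],[0,−1]]` and the generator of the second factor to `f₁ = [[0,1],[1,0]]`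
is injective with image exactly `G_μ`; equivalently, there is an injective
homomorphism from the infinite dihedral group `DihedralGroup 0` to `GL(2,ℤ)` with
image exactly `G_μ`. -/
theorem Gmu_iso_infinite_dihedral :
    (∃ φ : Monoid.Coprod (Multiplicative (ZMod 2)) (Multiplicative (ZMod 2)) →*
        Matrix.GeneralLinearGroup (Fin 2) ℤ,
      φ (Monoid.Coprod.inl (Multiplicative.ofAdd (1 : ZMod 2))) = fU 0 ∧
      φ (Monoid.Coprod.inr (Multiplicative.ofAdd (1 : ZMod 2))) = fU 1 ∧
      Function.Injective φ ∧
      (∀ g : Matrix.GeneralLinearGroup (Fin 2) ℤ, g ∈ φ.range ↔ memGmu g)) ∧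
    (∃ ψ : DihedralGroup 0 →* Matrix.GeneralLinearGroup (Fin 2) ℤ,
      Function.Injective ψ ∧
      (∀ g : Matrix.GeneralLinearGroup (Fin 2) ℤ, g ∈ ψ.range ↔ memGmu g)) := by
  constructor
  · refine ⟨GmuAux.phi, GmuAux.phi_a, GmuAux.phi_b, ?_, ?_⟩
    · intro u v h
      obtain ⟨s, rfl⟩ := GmuAux.rho_surjective u
      obtain ⟨t, rfl⟩ := GmuAux.rho_surjective v
      exact congrArg GmuAux.rho (GmuAux.psi_injective h)
    · intro g
      rw [← GmuAux.psi_range]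
      constructor
      · rintro ⟨u, rfl⟩
        obtain ⟨s, rfl⟩ := GmuAux.rho_surjective u
        exact ⟨s, rfl⟩
      · rintro ⟨s, rfl⟩
        exact ⟨GmuAux.rho s, rfl⟩
  · exact ⟨GmuAux.psi, GmuAux.psi_injective, GmuAux.psi_range⟩
end

section
/- G_μ is exactly the subgroup of GL(2,ℤ) generated by the two matrices f₁ = [[0,1],[1,0]] and f₂ = [[−1,0],[2,1]]; moreover f₁² = I and f₂² = I. -/
open Matrix

/-- `f₁ = [[0,1],[1,0]]` as an element of `GL(2,ℤ)`. -/
def f1U : Matrix.GeneralLinearGroup (Fin 2) ℤ :=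
  ⟨!![0, 1; 1, 0], !![0, 1; 1, 0], by decide, by decide⟩

/-- `f₂ = [[−1,0],[2,1]]` as an element of `GL(2,ℤ)`. -/
def f2U : Matrix.GeneralLinearGroup (Fin 2) ℤ :=
  ⟨!![-1, 0; 2, 1], !![-1, 0; 2, 1], by decide, by decide⟩

private def tU : Matrix.GeneralLinearGroup (Fin 2) ℤ := f1U * f2U

private lemma t_val : ((tU : Matrix (Fin 2) (Fin 2) ℤ)) = !![2,1;-1,0] := by
  simp [tU, f1U, f2U, Units.val_mul]

private lemma tinv_val :
    ((tU⁻¹ : Matrix.GeneralLinearGroup (Fin 2) ℤ) : Matrix (Fin 2) (Fin 2) ℤ) = !![0,-1;1,2] := by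
  simp [tU, _root_.mul_inv_rev, f1U, f2U, Units.val_mul]

private lemma t_zpow (n : ℤ) :
    ((tU ^ n : Matrix.GeneralLinearGroup (Fin 2) ℤ) : Matrix (Fin 2) (Fin 2) ℤ)
      = !![n+1, n; -n, 1-n] := by
  induction n using Int.induction_on with
  | zero =>
    simp
    ext i j; fin_cases i <;> fin_cases j <;> simp [Matrix.one_apply]
  | succ n ih =>
    rw [_root_.zpow_add_one, Units.val_mul, ih, t_val]
    ext i j; fin_cases i <;> fin_cases j <;>
      simp [Matrix.mul_apply, Fin.sum_univ_two] <;> ring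
  | pred n ih =>
    rw [_root_.zpow_sub_one, Units.val_mul, ih, tinv_val]
    ext i j; fin_cases i <;> fin_cases j <;>
      simp [Matrix.mul_apply, Fin.sum_univ_two] <;> ring

private def GmuSub : Subgroup (Matrix.GeneralLinearGroup (Fin 2) ℤ) where
  carrier := {g | memGmu g}
  one_mem' := by constructor <;> simp [Matrix.one_apply]
  mul_mem' := by
    rintro a b ⟨ha1, ha2⟩ ⟨hb1, hb2⟩
    have H : ∀ j : Fin 2,
        ((b : Matrix (Fin 2) (Fin 2) ℤ) 0 j + (b : Matrix (Fin 2) (Fin 2) ℤ) 1 j = 1) →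
        ((a : Matrix (Fin 2) (Fin 2) ℤ) * b) 0 j + ((a : Matrix (Fin 2) (Fin 2) ℤ) * b) 1 j = 1 := by
      intro j hbj
      simp only [Matrix.mul_apply, Fin.sum_univ_two]
      linear_combination ((b : Matrix (Fin 2) (Fin 2) ℤ) 0 j) * ha1 +
        ((b : Matrix (Fin 2) (Fin 2) ℤ) 1 j) * ha2 + hbj
    exact ⟨H 0 hb1, H 1 hb2⟩
  inv_mem' := by
    rintro g ⟨h1, h2⟩
    have hgi : (g : Matrix (Fin 2) (Fin 2) ℤ) * ((g⁻¹ : Matrix.GeneralLinearGroup (Fin 2) ℤ) : Matrix (Fin 2) (Fin 2) ℤ) = 1 := by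
      rw [← Units.val_mul, mul_inv_cancel, Units.val_one]
    set A := (g : Matrix (Fin 2) (Fin 2) ℤ)
    set B := ((g⁻¹ : Matrix.GeneralLinearGroup (Fin 2) ℤ) : Matrix (Fin 2) (Fin 2) ℤ)
    have e00 := congrFun (congrFun hgi 0) 0
    have e01 := congrFun (congrFun hgi 0) 1
    have e10 := congrFun (congrFun hgi 1) 0
    have e11 := congrFun (congrFun hgi 1) 1
    simp [Matrix.mul_apply, Fin.sum_univ_two, Matrix.one_apply] at e00 e01 e10 e11
    constructor
    · show B 0 0 + B 1 0 = 1
      linear_combination e00 + e10 - B 0 0 * h1 - B 1 0 * h2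
    · show B 0 1 + B 1 1 = 1
      linear_combination e01 + e11 - B 0 1 * h1 - B 1 1 * h2

/-- `G_μ` is exactly the subgroup of `GL(2,ℤ)` generated by
`f₁ = [[0,1],[1,0]]` and `f₂ = [[−1,0],[2,1]]`; moreover `f₁² = I` and `f₂² = I`. -/
theorem Gmu_eq_closure_f1_f2 :
    f1U ^ 2 = 1 ∧ f2U ^ 2 = 1 ∧
    (∀ g : Matrix.GeneralLinearGroup (Fin 2) ℤ,
      g ∈ Subgroup.closure ({f1U, f2U} : Set (Matrix.GeneralLinearGroup (Fin 2) ℤ)) ↔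
        memGmu g) := by
  refine ⟨?_, ?_, ?_⟩
  · apply Units.ext; rw [pow_two, Units.val_mul]; decide
  · apply Units.ext; rw [pow_two, Units.val_mul]; decide
  · intro g
    have hf1 : f1U ∈ Subgroup.closure ({f1U, f2U} : Set (Matrix.GeneralLinearGroup (Fin 2) ℤ)) :=
      Subgroup.subset_closure (by simp)
    have hf2 : f2U ∈ Subgroup.closure ({f1U, f2U} : Set (Matrix.GeneralLinearGroup (Fin 2) ℤ)) :=
      Subgroup.subset_closure (by simp)
    have ht : tU ∈ Subgroup.closure ({f1U, f2U} : Set (Matrix.GeneralLinearGroup (Fin 2) ℤ)) :=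
      mul_mem hf1 hf2
    constructor
    · intro hg
      have hle : Subgroup.closure ({f1U, f2U} : Set (Matrix.GeneralLinearGroup (Fin 2) ℤ)) ≤ GmuSub := by
        rw [Subgroup.closure_le]
        rintro x (rfl | rfl)
        · exact ⟨by decide, by decide⟩
        · exact ⟨by decide, by decide⟩
      exact hle hg
    · rintro ⟨h1, h2⟩
      set A := (g : Matrix (Fin 2) (Fin 2) ℤ) with hA
      have hdet : IsUnit A.det := (Matrix.isUnit_iff_isUnit_det A).mp g.isUnit
      rw [Matrix.det_fin_two, Int.isUnit_iff] at hdet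
      rcases hdet with hd | hd
      · have hb : A 0 1 = A 0 0 - 1 := by
          linear_combination -hd + A 0 0 * h2 - A 0 1 * h1
        have hgeq : g = tU ^ (A 0 0 - 1) := by
          apply Units.ext
          rw [t_zpow]
          show A = _
          ext i j
          fin_cases i <;> fin_cases j <;> simp <;> linarith
        rw [hgeq]
        exact zpow_mem ht _
      · have hb : A 0 1 = A 0 0 + 1 := by
          linear_combination -hd + A 0 0 * h2 - A 0 1 * h1
        have hgeq : g = tU ^ (A 0 0) * f1U := by
          apply Units.ext
          rw [Units.val_mul, t_zpow]
          show A = _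
          ext i j
          fin_cases i <;> fin_cases j <;>
            simp [f1U, Matrix.mul_apply, Fin.sum_univ_two] <;> linarith
        rw [hgeq]
        exact mul_mem (zpow_mem ht _) hf1
end
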